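/- arXiv:0801.3249 — 4 statements merged into one kernel-verified Lean document; each statement's English description precedes it below -/
import Mathlib

section
/- The 5×5 matrix A with rows (a, 1-2a, a, 0, 0), (0, 1/2, 1/2, 0, 0), (0, a, 1-2a, a, 0), (0, 0, 1/2, 1/2, 0), (0, 0, a, 1-2a, a), where a is a real parameter, has characteristic polynomial (λ-1)(λ-1/2)(λ-(1/2-2a))(λ-a)² ; in particular all its eigenvalues are real. -/
open Polynomial Matrix

set_option maxHeartbeats 1000000 in
theorem detM_aux (a : ℝ) :
    (!![X - C a, -C (1-2*a), -C a, 0, 0;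
       0, X - C (1/2), -C (1/2), 0, 0;
       0, -C a, X - C (1-2*a), -C a, 0;
       0, 0, -C (1/2), X - C (1/2), 0;
       0, 0, -C a, -C (1-2*a), X - C a] : Matrix (Fin 5) (Fin 5) ℝ[X]).det
    = (X - C 1) * (X - C (1/2)) * (X - C (1/2 - 2*a)) * (X - C a)^2 := by
  apply Polynomial.funext
  intro x
  simp [det_succ_column_zero, Fin.sum_univ_succ, Fin.succAbove, det_fin_three,
    Matrix.vecHead, Matrix.vecTail]
  ring

theorem stmt0 (a : ℝ) :
    let A : Matrix (Fin 5) (Fin 5) ℝ :=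
      !![a, 1-2*a, a, 0, 0;
         0, 1/2, 1/2, 0, 0;
         0, a, 1-2*a, a, 0;
         0, 0, 1/2, 1/2, 0;
         0, 0, a, 1-2*a, a]
    A.charpoly = (X - C 1) * (X - C (1/2)) * (X - C (1/2 - 2*a)) * (X - C a)^2 ∧
    ∀ z : ℂ, ((A.map (Complex.ofReal)).charpoly).IsRoot z → z.im = 0 := by
  intro A
  have hch : charmatrix A =
      !![X - C a, -C (1-2*a), -C a, 0, 0;
       0, X - C (1/2), -C (1/2), 0, 0;
       0, -C a, X - C (1-2*a), -C a, 0;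
       0, 0, -C (1/2), X - C (1/2), 0;
       0, 0, -C a, -C (1-2*a), X - C a] := by
    ext i j
    fin_cases i <;> fin_cases j <;> simp [charmatrix, A, Matrix.vecHead, Matrix.vecTail]
  have hcp : A.charpoly = (X - C 1) * (X - C (1/2)) * (X - C (1/2 - 2*a)) * (X - C a)^2 := by
    rw [Matrix.charpoly, hch, detM_aux]
  refine ⟨hcp, ?_⟩
  intro z hz
  have hmap := Matrix.charpoly_map A Complex.ofRealHom
  rw [show ⇑Complex.ofRealHom = Complex.ofReal from rfl] at hmap
  rw [hmap, hcp] at hz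
  simp only [Polynomial.map_mul, Polynomial.map_pow, Polynomial.map_sub, Polynomial.map_X,
    Polynomial.map_C, IsRoot, eval_mul, eval_pow, eval_sub, eval_X, eval_C, mul_eq_zero,
    sq_eq_zero_iff, sub_eq_zero] at hz
  rcases hz with ((h | h) | h) | h <;> rw [h] <;> simp
end

section
/- For every real number a, all eigenvalues of the 5×5 real matrix with rows (a, 1-2a, a, 0, 0), (0, 1/2, 1/2, 0, 0), (0, a, 1-2a, a, 0), (0, 0, 1/2, 1/2, 0), (0, 0, a, 1-2a, a) are real (i.e., the complex eigenvalues of this matrix, viewed over ℂ, all have imaginary part zero). -/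
set_option maxHeartbeats 1000000
set_option maxRecDepth 10000

open Polynomial Matrix

theorem stmt1 (a : ℝ) :
    ∀ z : ℂ,
      (((!![a, 1-2*a, a, 0, 0;
            0, 1/2, 1/2, 0, 0;
            0, a, 1-2*a, a, 0;
            0, 0, 1/2, 1/2, 0;
            0, 0, a, 1-2*a, a] : Matrix (Fin 5) (Fin 5) ℝ).map
          (Complex.ofReal)).charpoly).IsRoot z → z.im = 0 := by
  intro z hz
  set M := ((!![a, 1-2*a, a, 0, 0;
            0, 1/2, 1/2, 0, 0;
            0, a, 1-2*a, a, 0;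
            0, 0, 1/2, 1/2, 0;
            0, 0, a, 1-2*a, a] : Matrix (Fin 5) (Fin 5) ℝ).map
          (Complex.ofReal)) with hM
  have h1 : eval z M.charpoly
      = ((charmatrix M).map (evalRingHom z)).det := by
    rw [Matrix.charpoly]
    exact RingHom.map_det (evalRingHom z) _
  have h2 : (charmatrix M).map (evalRingHom z)
      = !![z - a, -(1-2*(a:ℂ)), -(a:ℂ), 0, 0;
           0, z - 1/2, -(1/2:ℂ), 0, 0;
           0, -(a:ℂ), z - (1-2*a), -(a:ℂ), 0;
           0, 0, -(1/2:ℂ), z - 1/2, 0;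
           0, 0, -(a:ℂ), -(1-2*(a:ℂ)), z - a] := by
    ext i j
    fin_cases i <;> fin_cases j <;>
      simp [hM, charmatrix_apply, vecHead, vecTail]
  have h3 : (z - a)^2 * (z - 1) * (z - 1/2) * (z - (1/2 - 2*a)) = 0 := by
    have := hz
    rw [IsRoot, h1, h2] at this
    rw [← this]
    simp [Matrix.det_succ_row_zero, Fin.sum_univ_succ, Fin.succAbove]
    ring
  rcases mul_eq_zero.mp h3 with h | h
  · rcases mul_eq_zero.mp h with h | h
    · rcases mul_eq_zero.mp h with h | h
      · have : z = (a:ℂ) := by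
          have := pow_eq_zero_iff (n := 2) (by norm_num) |>.mp h
          linear_combination this
        simp [this]
      · have : z = 1 := by linear_combination h
        simp [this]
    · have : z = 1/2 := by linear_combination h
      rw [this]; norm_num
  · have : z = ((1/2 - 2*a : ℝ) : ℂ) := by push_cast; linear_combination h
    simp [this]
end

section
/- The 6×6 matrix A with rows (-1/10, 4/5, 3/10, 0, 0, 0), (0, 3/10, 4/5, -1/10, 0, 0), (0, -1/10, 4/5, 3/10, 0, 0), (0, 0, 3/10, 4/5, -1/10, 0), (0, 0, -1/10, 4/5, 3/10, 0), (0, 0, 0, 3/10, 4/5, -1/10) has eigenvalues (over ℂ) exactly -1/10 (with algebraic multiplicity 2), 2/5, 1, (2 - i√2)/5, and (2 + i√2)/5. -/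
open Polynomial Matrix

private lemma cons_val_five {α : Type*} (x : α) (u : Fin 5 → α) :
    Matrix.vecCons x u 5 = Matrix.vecHead (Matrix.vecTail (Matrix.vecTail (Matrix.vecTail (Matrix.vecTail u)))) :=
  rfl

noncomputable def subdivA : Matrix (Fin 6) (Fin 6) ℝ :=
  !![-1/10, 4/5, 3/10, 0, 0, 0;
     0, 3/10, 4/5, -1/10, 0, 0;
     0, -1/10, 4/5, 3/10, 0, 0;
     0, 0, 3/10, 4/5, -1/10, 0;
     0, 0, -1/10, 4/5, 3/10, 0;
     0, 0, 0, 3/10, 4/5, -1/10]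

set_option maxHeartbeats 4000000 in
set_option maxRecDepth 10000 in
theorem stmt5 :
    (subdivA.map (Complex.ofReal)).charpoly =
      (X - C (-1/10))^2 * (X - C (2/5)) * (X - C 1) *
        (X - C ((2 - Complex.I * Real.sqrt 2)/5)) *
        (X - C ((2 + Complex.I * Real.sqrt 2)/5)) := by
  have hs : ((Real.sqrt 2 : ℝ) : ℂ) * ((Real.sqrt 2 : ℝ) : ℂ) = 2 := by
    rw [← Complex.ofReal_mul, Real.mul_self_sqrt (by norm_num : (0:ℝ) ≤ 2)]
    norm_num
  have hI : Complex.I * Complex.I = -1 := Complex.I_mul_I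
  have h1 : ((2 - Complex.I * Real.sqrt 2)/5) + ((2 + Complex.I * Real.sqrt 2)/5) = (4/5 : ℂ) := by
    ring
  have h2 : ((2 - Complex.I * Real.sqrt 2)/5) * ((2 + Complex.I * Real.sqrt 2)/5) = (6/25 : ℂ) := by
    linear_combination (-(Complex.I*Complex.I)/25) * hs + (-2/25) * hI
  have key : (X - C ((2 - Complex.I * Real.sqrt 2)/5)) * (X - C ((2 + Complex.I * Real.sqrt 2)/5))
      = X^2 - C (4/5) * X + C (6/25) := by
    rw [← h1, ← h2, C_add, C_mul]; ring
  calc (subdivA.map (Complex.ofReal)).charpoly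
      = (X - C (-1/10))^2 * (X - C (2/5)) * (X - C 1) * (X^2 - C (4/5) * X + C (6/25)) := ?_
    _ = _ := by rw [← key]; ring
  apply Polynomial.funext
  intro z
  rw [Matrix.charpoly, ← coe_evalRingHom, RingHom.map_det]
  have hmat : (charmatrix (subdivA.map Complex.ofReal)).map (eval z) =
      !![z+1/10, -4/5, -3/10, 0, 0, 0;
         0, z-3/10, -4/5, 1/10, 0, 0;
         0, 1/10, z-4/5, -3/10, 0, 0;
         0, 0, -3/10, z-4/5, 1/10, 0;
         0, 0, 1/10, -4/5, z-3/10, 0;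
         0, 0, 0, -3/10, -4/5, z+1/10] := by
    ext i j
    fin_cases i <;> fin_cases j <;>
      simp [charmatrix_apply, subdivA, Matrix.map_apply, cons_val_five, Matrix.vecHead, Matrix.vecTail] <;>
      norm_num
  rw [RingHom.mapMatrix_apply, coe_evalRingHom, hmat]
  have hdet : (!![z+1/10, -4/5, -3/10, 0, 0, 0;
         0, z-3/10, -4/5, 1/10, 0, 0;
         0, 1/10, z-4/5, -3/10, 0, 0;
         0, 0, -3/10, z-4/5, 1/10, 0;
         0, 0, 1/10, -4/5, z-3/10, 0;
         0, 0, 0, -3/10, -4/5, z+1/10] : Matrix (Fin 6) (Fin 6) ℂ).det =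
      (z+1/10)^2*(z-2/5)*(z-1)*(z^2-4/5*z+6/25) := by
    simp [Matrix.det_succ_column_zero, Fin.sum_univ_succ, Fin.succAbove,
      Fin.castSucc, Fin.castAdd, Fin.castLE, Matrix.vecHead, Matrix.vecTail]
    ring
  rw [hdet]
  simp only [eval_mul, eval_add, eval_sub, eval_pow, eval_C, eval_X, eval_neg, eval_one]
  ring
end

section
/- The 6×6 matrix A with rows (-1/10, 4/5, 3/10, 0, 0, 0), (0, 3/10, 4/5, -1/10, 0, 0), (0, -1/10, 4/5, 3/10, 0, 0), (0, 0, 3/10, 4/5, -1/10, 0), (0, 0, -1/10, 4/5, 3/10, 0), (0, 0, 0, 3/10, 4/5, -1/10), viewed over ℂ, has an eigenvalue with nonzero imaginary part, namely (2 + i√2)/5. -/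
open Polynomial Matrix

private lemma cons_val_five' {α : Type*} {m : ℕ} (x : α) (u : Fin (m+5) → α) :
    vecCons x u 5 = vecHead (vecTail (vecTail (vecTail (vecTail u)))) :=
  rfl

theorem stmt6 :
    ((subdivA.map (Complex.ofReal)).charpoly).IsRoot ((2 + Complex.I * Real.sqrt 2)/5) ∧
    ((2 + Complex.I * Real.sqrt 2)/5 : ℂ).im ≠ 0 := by
  have h2 : ((Real.sqrt 2 : ℝ) : ℂ) * ((Real.sqrt 2 : ℝ) : ℂ) = 2 := by
    norm_cast
    exact Real.mul_self_sqrt (by norm_num)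
  set t : ℂ := Complex.I * Real.sqrt 2 with htdef
  have ht : t * t = -2 := by
    rw [htdef, mul_mul_mul_comm, Complex.I_mul_I, h2]; ring
  constructor
  · show Polynomial.eval ((2 + t)/5) _ = 0
    rw [Matrix.charpoly, _root_.eval_det, matPolyEquiv_charmatrix, eval_sub, eval_X, eval_C]
    rw [← Matrix.exists_mulVec_eq_zero_iff]
    refine ⟨![(-211:ℂ), -133-40*t, 3-34*t, -3+34*t, 133+40*t, 211], ?_, ?_⟩
    · intro h
      have h0 := congrFun h 0
      simp at h0
    · funext j
      fin_cases j <;>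
        simp [Matrix.mulVec, dotProduct, Fin.sum_univ_six, subdivA,
          Matrix.scalar_apply, Matrix.diagonal_apply, Matrix.sub_apply,
          Matrix.map_apply, cons_val_five', Matrix.vecHead, Matrix.vecTail] <;>
        first
          | linear_combination (-8 : ℂ) * ht
          | linear_combination (-34/5 : ℂ) * ht
          | linear_combination (34/5 : ℂ) * ht
          | linear_combination (8 : ℂ) * ht
          | linear_combination ht
          | ring
  · have h : (Real.sqrt 2) > 0 := Real.sqrt_pos.mpr (by norm_num)
    simp only [htdef, Complex.div_im, Complex.add_im, Complex.mul_im,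
      Complex.I_re, Complex.I_im, Complex.ofReal_re, Complex.ofReal_im]
    norm_num
end
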